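/- Let 0 < α < 1 and let 𝓕 be a finite family of subsets of ℝ^d with the following property: for every finite nonempty multiset 𝓕' whose elements are members of 𝓕, there exists a point x ∈ ℝ^d belonging to at least α·|𝓕'| elements of 𝓕' (counted with multiplicity). Then there exists a finite nonempty multiset Q of points of ℝ^d such that every member of 𝓕 contains at least α·|Q| points of Q (counted with multiplicity). -/

import Mathlib

namespace AKLP

def dot {n : ℕ} (a x : Fin n → ℚ) : ℚ := ∑ i, a i * x i

lemma dot_snoc {n : ℕ} (a : Fin (n+1) → ℚ) (x : Fin n → ℚ) (t : ℚ) :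
    dot a (Fin.snoc x t) = dot (Fin.init a) x + a (Fin.last n) * t := by
  unfold dot
  rw [Fin.sum_univ_castSucc]
  simp [Fin.init]

lemma exists_sep {P Q : Type} [Fintype P] [Fintype Q] (f : P → ℚ) (g : Q → ℚ)
    (h : ∀ q p, g q ≤ f p) : ∃ t : ℚ, (∀ p, t ≤ f p) ∧ (∀ q, g q ≤ t) := by
  by_cases hP : Nonempty P
  · obtain ⟨p0⟩ := hP
    exact ⟨Finset.univ.inf' ⟨p0, Finset.mem_univ _⟩ f,
      fun p => Finset.inf'_le f (Finset.mem_univ p),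
      fun q => Finset.le_inf' _ f fun p _ => h q p⟩
  · by_cases hQ : Nonempty Q
    · obtain ⟨q0⟩ := hQ
      exact ⟨Finset.univ.sup' ⟨q0, Finset.mem_univ _⟩ g,
        fun p => absurd ⟨p⟩ hP, fun q => Finset.le_sup' g (Finset.mem_univ q)⟩
    · exact ⟨0, fun p => absurd ⟨p⟩ hP, fun q => absurd ⟨q⟩ hQ⟩

lemma cross_div {Lp Lq X Y : ℚ} (hp : 0 < Lp) (hq : Lq < 0)
    (h : 0 ≤ (-Lq) * Y + Lp * X) :
    X / Lq ≤ Y / Lp := by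
  rw [div_le_iff_of_neg hq, div_mul_eq_mul_div, div_le_iff₀ hp]
  nlinarith

theorem fm_step {n : ℕ} {ι : Type} [Fintype ι] (A : ι → Fin (n+1) → ℚ) (b : ι → ℚ) :
    ∃ (κ : Type) (_ : Fintype κ) (A' : κ → Fin n → ℚ) (b' : κ → ℚ) (Y : κ → ι → ℚ),
      (∀ x : Fin n → ℚ,
        (∀ k, dot (A' k) x ≤ b' k) ↔ ∃ t : ℚ, ∀ i, dot (A i) (Fin.snoc x t) ≤ b i) ∧
      (∀ k i, 0 ≤ Y k i) ∧
      (∀ k (j : Fin (n+1)), ∑ i, Y k i * A i j = (Fin.snoc (A' k) (0:ℚ) : Fin (n+1) → ℚ) j) ∧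
      (∀ k, ∑ i, Y k i * b i = b' k) := by
  classical
  refine ⟨({i : ι // A i (Fin.last n) = 0} ⊕
      ({i : ι // 0 < A i (Fin.last n)} × {i : ι // A i (Fin.last n) < 0})), inferInstance,
    (fun k => Sum.rec (fun z => Fin.init (A z.val))
      (fun pq => fun j => (-(A pq.2.val (Fin.last n))) * A pq.1.val j.castSucc
        + (A pq.1.val (Fin.last n)) * A pq.2.val j.castSucc) k),
    (fun k => Sum.rec (fun z => b z.val)
      (fun pq => (-(A pq.2.val (Fin.last n))) * b pq.1.val
        + (A pq.1.val (Fin.last n)) * b pq.2.val) k),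
    (fun k => Sum.rec (fun z => fun i => if i = z.val then 1 else 0)
      (fun pq => fun i => (if i = pq.1.val then -(A pq.2.val (Fin.last n)) else 0)
        + (if i = pq.2.val then A pq.1.val (Fin.last n) else 0)) k),
    ?_, ?_, ?_, ?_⟩
  · -- equivalence
    intro x
    have hdotcombo : ∀ (p : {i : ι // 0 < A i (Fin.last n)}) (q : {i : ι // A i (Fin.last n) < 0}),
        dot (fun j => (-(A q.val (Fin.last n))) * A p.val j.castSucc
          + (A p.val (Fin.last n)) * A q.val j.castSucc) x
        = (-(A q.val (Fin.last n))) * dot (Fin.init (A p.val)) x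
          + (A p.val (Fin.last n)) * dot (Fin.init (A q.val)) x := by
      intro p q
      unfold dot
      rw [Finset.mul_sum, Finset.mul_sum, ← Finset.sum_add_distrib]
      refine Finset.sum_congr rfl fun j _ => ?_
      simp only [Fin.init]
      ring
    constructor
    · intro hsat
      have hcross : ∀ (q : {i : ι // A i (Fin.last n) < 0}) (p : {i : ι // 0 < A i (Fin.last n)}),
          (b q.val - dot (Fin.init (A q.val)) x) / (A q.val (Fin.last n))
            ≤ (b p.val - dot (Fin.init (A p.val)) x) / (A p.val (Fin.last n)) := by
        intro q p
        have hc := hsat (Sum.inr (p, q))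
        simp only at hc
        rw [hdotcombo p q] at hc
        exact cross_div p.prop q.prop (by nlinarith [hc])
      obtain ⟨t, htub, htlb⟩ := exists_sep
        (fun p : {i : ι // 0 < A i (Fin.last n)} =>
          (b p.val - dot (Fin.init (A p.val)) x) / (A p.val (Fin.last n)))
        (fun q : {i : ι // A i (Fin.last n) < 0} =>
          (b q.val - dot (Fin.init (A q.val)) x) / (A q.val (Fin.last n)))
        hcross
      refine ⟨t, fun i => ?_⟩
      rw [dot_snoc]
      rcases lt_trichotomy (A i (Fin.last n)) 0 with hneg | hzero | hpos
      · have hlb := htlb ⟨i, hneg⟩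
        simp only at hlb
        rw [div_le_iff_of_neg hneg] at hlb
        linarith
      · have hz := hsat (Sum.inl ⟨i, hzero⟩)
        simp only at hz
        rw [hzero]
        linarith
      · have hub := htub ⟨i, hpos⟩
        simp only at hub
        rw [le_div_iff₀ hpos] at hub
        linarith
    · rintro ⟨t, ht⟩ k
      rcases k with z | ⟨p, q⟩
      · have hz := ht z.val
        rw [dot_snoc, z.prop, zero_mul, add_zero] at hz
        exact hz
      · have hp := ht p.val
        have hq := ht q.val
        rw [dot_snoc] at hp hq
        simp only
        rw [hdotcombo p q]
        have hp' : 0 < A p.val (Fin.last n) := p.prop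
        have hq' : A q.val (Fin.last n) < 0 := q.prop
        nlinarith [hp, hq]
  · rintro (z | ⟨p, q⟩) i
    · simp only
      split <;> norm_num
    · simp only
      have hp' : 0 < A p.val (Fin.last n) := p.prop
      have hq' : A q.val (Fin.last n) < 0 := q.prop
      have h1 : (0:ℚ) ≤ if i = p.val then -(A q.val (Fin.last n)) else 0 := by
        split
        · linarith
        · exact le_rfl
      have h2 : (0:ℚ) ≤ if i = q.val then A p.val (Fin.last n) else 0 := by
        split
        · linarith
        · exact le_rfl
      linarith
  · rintro (z | ⟨p, q⟩) j
    · simp only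
      have hsum : ∑ i, (if i = z.val then (1:ℚ) else 0) * A i j = A z.val j := by
        rw [Finset.sum_congr rfl (fun i _ => by rw [ite_mul, one_mul, zero_mul]),
          Finset.sum_ite_eq' Finset.univ z.val (fun i => A i j)]
        simp
      rw [hsum]
      induction j using Fin.lastCases with
      | last => rw [Fin.snoc_last]; exact z.prop
      | cast j0 => rw [Fin.snoc_castSucc]; simp [Fin.init]
    · simp only
      have hsum : ∑ i, ((if i = p.val then -(A q.val (Fin.last n)) else 0)
            + (if i = q.val then A p.val (Fin.last n) else 0)) * A i j
          = (-(A q.val (Fin.last n))) * A p.val j + (A p.val (Fin.last n)) * A q.val j := by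
        rw [Finset.sum_congr rfl (fun i _ => show ((if i = p.val then -(A q.val (Fin.last n)) else 0)
              + (if i = q.val then A p.val (Fin.last n) else 0)) * A i j
            = (if i = p.val then -(A q.val (Fin.last n)) * A i j else 0)
              + (if i = q.val then A p.val (Fin.last n) * A i j else 0) by split_ifs <;> ring),
          Finset.sum_add_distrib,
          Finset.sum_ite_eq' Finset.univ p.val (fun i => -(A q.val (Fin.last n)) * A i j),
          Finset.sum_ite_eq' Finset.univ q.val (fun i => A p.val (Fin.last n) * A i j)]
        simp
      rw [hsum]
      induction j using Fin.lastCases with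
      | last => rw [Fin.snoc_last]; ring
      | cast j0 => rw [Fin.snoc_castSucc]
  · rintro (z | ⟨p, q⟩)
    · simp only
      rw [Finset.sum_congr rfl (fun i _ => by rw [ite_mul, one_mul, zero_mul]),
        Finset.sum_ite_eq' Finset.univ z.val (fun i => b i)]
      simp
    · simp only
      rw [Finset.sum_congr rfl (fun i _ => show ((if i = p.val then -(A q.val (Fin.last n)) else 0)
            + (if i = q.val then A p.val (Fin.last n) else 0)) * b i
          = (if i = p.val then -(A q.val (Fin.last n)) * b i else 0)
            + (if i = q.val then A p.val (Fin.last n) * b i else 0) by split_ifs <;> ring),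
        Finset.sum_add_distrib,
        Finset.sum_ite_eq' Finset.univ p.val (fun i => -(A q.val (Fin.last n)) * b i),
        Finset.sum_ite_eq' Finset.univ q.val (fun i => A p.val (Fin.last n) * b i)]
      simp

theorem fm_reduce (n : ℕ) : ∀ {ι : Type} [Fintype ι] (A : ι → Fin (n+1) → ℚ) (b : ι → ℚ),
    ∃ (κ : Type) (_ : Fintype κ) (e : κ → ℚ) (c : κ → ℚ) (Y : κ → ι → ℚ),
      (∀ v : ℚ, (∀ k, e k * v ≤ c k) ↔
        ∃ x : Fin (n+1) → ℚ, x 0 = v ∧ ∀ i, dot (A i) x ≤ b i) ∧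
      (∀ k i, 0 ≤ Y k i) ∧
      (∀ k, ∑ i, Y k i * A i 0 = e k) ∧
      (∀ k (j : Fin (n+1)), j ≠ 0 → ∑ i, Y k i * A i j = 0) ∧
      (∀ k, ∑ i, Y k i * b i = c k) := by
  classical
  induction n with
  | zero =>
    intro ι _ A b
    refine ⟨ι, inferInstance, fun i => A i 0, b, fun k i => if i = k then 1 else 0,
      ?_, ?_, ?_, ?_, ?_⟩
    · intro v
      constructor
      · intro hk
        refine ⟨fun _ => v, rfl, fun i => ?_⟩
        have : dot (A i) (fun _ => v) = A i 0 * v := by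
          unfold dot; rw [Fin.sum_univ_one]
        rw [this]; exact hk i
      · rintro ⟨x, hx0, hx⟩ k
        have : dot (A k) x = A k 0 * v := by
          unfold dot; rw [Fin.sum_univ_one, hx0]
        rw [← this]; exact hx k
    · intro k i
      by_cases hik : i = k <;> simp [hik]
    · intro k
      rw [Finset.sum_congr rfl (fun i _ => by rw [ite_mul, one_mul, zero_mul]),
        Finset.sum_ite_eq' Finset.univ k (fun i => A i 0)]
      simp
    · intro k j hj
      exact absurd (Fin.ext (Nat.lt_one_iff.mp j.isLt)) hj
    · intro k
      rw [Finset.sum_congr rfl (fun i _ => by rw [ite_mul, one_mul, zero_mul]),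
        Finset.sum_ite_eq' Finset.univ k (fun i => b i)]
      simp
  | succ n ih =>
    intro ι _ A b
    obtain ⟨κ₁, i1, A', b', Y₁, hequiv₁, hY₁, hcol₁, hb₁⟩ := fm_step A b
    obtain ⟨κ₂, i2, e, c, Y₂, hequiv₂, hY₂, hcol₂0, hcol₂j, hb₂⟩ := ih A' b'
    refine ⟨κ₂, i2, e, c, fun k i => ∑ k1, Y₂ k k1 * Y₁ k1 i, ?_, ?_, ?_, ?_, ?_⟩
    · intro v
      rw [hequiv₂ v]
      constructor
      · rintro ⟨x, hx0, hx⟩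
        obtain ⟨t, ht⟩ := (hequiv₁ x).mp hx
        refine ⟨Fin.snoc x t, ?_, ht⟩
        rw [show (0 : Fin (n+2)) = Fin.castSucc 0 by simp, Fin.snoc_castSucc]
        exact hx0
      · rintro ⟨X, hX0, hX⟩
        refine ⟨Fin.init X, ?_, (hequiv₁ (Fin.init X)).mpr ⟨X (Fin.last (n+1)), ?_⟩⟩
        · rw [show Fin.init X 0 = X (Fin.castSucc 0) from rfl]
          simpa using hX0
        · rw [Fin.snoc_init_self]; exact hX
    · intro k i
      exact Finset.sum_nonneg fun k1 _ => mul_nonneg (hY₂ k k1) (hY₁ k1 i)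
    · intro k
      have hswap : ∑ i, (∑ k1, Y₂ k k1 * Y₁ k1 i) * A i 0
          = ∑ k1, Y₂ k k1 * ∑ i, Y₁ k1 i * A i 0 := by
        rw [Finset.sum_congr rfl (fun i _ => Finset.sum_mul ..), Finset.sum_comm]
        exact Finset.sum_congr rfl fun k1 _ => by
          rw [Finset.mul_sum]; exact Finset.sum_congr rfl fun i _ => by ring
      rw [hswap]
      have : ∀ k1, (∑ i, Y₁ k1 i * A i 0) = A' k1 0 := by
        intro k1
        have := hcol₁ k1 0
        rwa [show (0 : Fin (n+2)) = Fin.castSucc 0 by simp, Fin.snoc_castSucc] at this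
      rw [Finset.sum_congr rfl fun k1 _ => by rw [this k1]]
      exact hcol₂0 k
    · intro k j hj
      have hswap : ∑ i, (∑ k1, Y₂ k k1 * Y₁ k1 i) * A i j
          = ∑ k1, Y₂ k k1 * ∑ i, Y₁ k1 i * A i j := by
        rw [Finset.sum_congr rfl (fun i _ => Finset.sum_mul ..), Finset.sum_comm]
        exact Finset.sum_congr rfl fun k1 _ => by
          rw [Finset.mul_sum]; exact Finset.sum_congr rfl fun i _ => by ring
      rw [hswap]
      induction j using Fin.lastCases with
      | last =>
        rw [Finset.sum_congr rfl fun k1 _ => by rw [hcol₁ k1 (Fin.last (n+1)), Fin.snoc_last, mul_zero]]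
        exact Finset.sum_const_zero
      | cast j0 =>
        have hj0 : j0 ≠ 0 := by
          intro hEq
          exact hj (by rw [hEq]; simp)
        rw [Finset.sum_congr rfl fun k1 _ => by rw [hcol₁ k1 j0.castSucc, Fin.snoc_castSucc]]
        exact hcol₂j k j0 hj0
    · intro k
      have hswap : ∑ i, (∑ k1, Y₂ k k1 * Y₁ k1 i) * b i
          = ∑ k1, Y₂ k k1 * ∑ i, Y₁ k1 i * b i := by
        rw [Finset.sum_congr rfl (fun i _ => Finset.sum_mul ..), Finset.sum_comm]
        exact Finset.sum_congr rfl fun k1 _ => by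
          rw [Finset.mul_sum]; exact Finset.sum_congr rfl fun i _ => by ring
      rw [hswap]
      rw [Finset.sum_congr rfl fun k1 _ => by rw [hb₁ k1]]
      exact hb₂ k



lemma countP_replicate {α : Type*} (p : α → Prop) [DecidablePred p] (m : ℕ) (a : α) :
    Multiset.countP p (Multiset.replicate m a) = if p a then m else 0 := by
  induction m with
  | zero => simp
  | succ m ih =>
    rw [Multiset.replicate_succ, Multiset.countP_cons, ih]
    split <;> simp

lemma countP_finsum {α β : Type*} (p : α → Prop) [DecidablePred p] (s : Finset β)
    (f : β → Multiset α) :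
    Multiset.countP p (∑ i ∈ s, f i) = ∑ i ∈ s, Multiset.countP p (f i) := by
  classical
  induction s using Finset.induction_on with
  | empty => simp
  | insert _ _ hni ih => rename_i a s'
                         rw [Finset.sum_insert hni, Finset.sum_insert hni, Multiset.countP_add, ih]

lemma card_finsum {α β : Type*} (s : Finset β) (f : β → Multiset α) :
    Multiset.card (∑ i ∈ s, f i) = ∑ i ∈ s, Multiset.card (f i) := by
  classical
  induction s using Finset.induction_on with
  | empty => simp
  | insert _ _ hni ih => rename_i a s'
                         rw [Finset.sum_insert hni, Finset.sum_insert hni, Multiset.card_add, ih]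

lemma exists_nat_mul (q : ℚ) (hq : 0 ≤ q) (D : ℕ) (hdvd : q.den ∣ D) :
    ∃ m : ℕ, (m : ℚ) = q * D := by
  obtain ⟨cc, hcc⟩ := hdvd
  refine ⟨q.num.toNat * cc, ?_⟩
  have h1 : ((q.num.toNat : ℕ) : ℚ) = (q.num : ℚ) := by
    exact_mod_cast Int.toNat_of_nonneg (Rat.num_nonneg.mpr hq)
  push_cast
  rw [h1, hcc]
  push_cast
  rw [← mul_assoc, Rat.mul_den_eq_num]


lemma exists_reps {E : Type*} (x0 : E) (F : Finset (Set E)) :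
    ∃ R : Finset E, R.Nonempty ∧ ∀ x : E, ∃ r ∈ R, ∀ A ∈ F, (x ∈ A ↔ r ∈ A) := by
  classical
  set pat : E → Finset (Set E) := fun x => F.filter (fun A => x ∈ A) with hpat
  set P : Finset (Finset (Set E)) := F.powerset.filter (fun p => ∃ x, pat x = p) with hP
  have hmemP : ∀ x : E, pat x ∈ P := by
    intro x
    rw [hP, Finset.mem_filter, Finset.mem_powerset]
    exact ⟨Finset.filter_subset _ _, ⟨x, rfl⟩⟩
  refine ⟨P.image (fun p => if h : ∃ x : E, pat x = p then h.choose else x0), ?_, ?_⟩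
  · exact Finset.Nonempty.image ⟨pat x0, hmemP x0⟩ _
  · intro x
    have hex : ∃ y : E, pat y = pat x := ⟨x, rfl⟩
    refine ⟨_, Finset.mem_image_of_mem _ (hmemP x), ?_⟩
    rw [dif_pos hex]
    have hc : pat hex.choose = pat x := hex.choose_spec
    intro A hA
    constructor
    · intro hxA
      have : A ∈ pat x := Finset.mem_filter.mpr ⟨hA, hxA⟩
      rw [← hc] at this
      exact (Finset.mem_filter.mp this).2
    · intro hrA
      have : A ∈ pat hex.choose := Finset.mem_filter.mpr ⟨hA, hrA⟩
      rw [hc] at this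
      exact (Finset.mem_filter.mp this).2

end AKLP


open scoped Classical in
/-- The LP-duality lemma of Alon–Kleitman: if every finite nonempty multiset of members
of `F` has a point covering an `α`-fraction of it (with multiplicity), then there is a
finite nonempty multiset `Q` of points such that every member of `F` contains at least
an `α`-fraction of `Q` (with multiplicity). -/
theorem lp_duality_lemma
    (d : ℕ) (α : ℝ) (hα0 : 0 < α) (hα1 : α < 1)
    (F : Finset (Set (EuclideanSpace ℝ (Fin d))))
    (h : ∀ F' : Multiset (Set (EuclideanSpace ℝ (Fin d))),
      (∀ A ∈ F', A ∈ F) → F' ≠ 0 →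
      ∃ x : EuclideanSpace ℝ (Fin d),
        α * (Multiset.card F' : ℝ) ≤ ((F'.countP (fun A => x ∈ A) : ℕ) : ℝ)) :
    ∃ Q : Multiset (EuclideanSpace ℝ (Fin d)), Q ≠ 0 ∧
      ∀ A ∈ F, α * (Multiset.card Q : ℝ) ≤ ((Q.countP (fun x => x ∈ A) : ℕ) : ℝ) := by
  classical
  rcases F.eq_empty_or_nonempty with hFem | hFne
  · refine ⟨{0}, by simp, ?_⟩
    intro A hA
    rw [hFem] at hA
    exact absurd hA (Finset.notMem_empty A)
  obtain ⟨R, hRne, hR⟩ := AKLP.exists_reps (0 : EuclideanSpace ℝ (Fin d)) F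
  set nR := R.card with hnR
  set eR : {r // r ∈ R} ≃ Fin nR := R.equivFin with heR
  set σ : Fin nR → {r // r ∈ R} := ⇑eR.symm with hσ
  have hσeR : ∀ r, σ (eR r) = r := fun r => by rw [hσ]; exact eR.symm_apply_apply r
  have hσinj : Function.Injective σ := by rw [hσ]; exact eR.symm.injective
  have hsumr : ∀ (r : {r // r ∈ R}) (f : Fin nR → ℚ),
      (∑ j, if σ j = r then f j else 0) = f (eR r) := by
    intro r f
    rw [Finset.sum_congr rfl (fun j _ => show (if σ j = r then f j else 0) = (if j = eR r then f j else 0) by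
        by_cases hj : j = eR r
        · rw [if_pos hj, if_pos (by rw [hj, hσeR])]
        · rw [if_neg hj, if_neg (fun hEq => hj (hσinj (by rw [hEq, hσeR])))]),
      Finset.sum_ite_eq' Finset.univ (eR r) f]
    simp
  set indic : Fin nR → {A // A ∈ F} → ℚ :=
    fun j s => if (σ j : EuclideanSpace ℝ (Fin d)) ∈ (s : Set (EuclideanSpace ℝ (Fin d)))
      then 1 else 0 with hindic
  have hindnn : ∀ j s, 0 ≤ indic j s := by
    intro j s; rw [hindic]; dsimp only; split <;> norm_num
  have hindle1 : ∀ j s, indic j s ≤ 1 := by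
    intro j s; rw [hindic]; dsimp only; split <;> norm_num
  set Aa : ({A // A ∈ F} ⊕ ({r // r ∈ R} ⊕ Bool)) → Fin (nR+1) → ℚ :=
    Sum.elim (fun s => Fin.cons 1 (fun j => -(indic j s)))
      (Sum.elim (fun r => Fin.cons 0 (fun j => if σ j = r then (-1:ℚ) else 0))
        (fun t => Fin.cons 0 (fun _ => if t then (1:ℚ) else -1))) with hAa
  set bb : ({A // A ∈ F} ⊕ ({r // r ∈ R} ⊕ Bool)) → ℚ :=
    Sum.elim (fun _ => 0) (Sum.elim (fun _ => 0) (fun t => if t then (1:ℚ) else -1)) with hbb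
  obtain ⟨κ, instκ, e, c, Y, hEquiv, hYnn, hcol0, hcolj, hbY⟩ := AKLP.fm_reduce nR Aa bb
  haveI := instκ
  have hdot : ∀ i (x : Fin (nR+1) → ℚ),
      AKLP.dot (Aa i) x = Aa i 0 * x 0 + ∑ j : Fin nR, Aa i j.succ * x j.succ :=
    fun i x => Fin.sum_univ_succ (fun jj => Aa i jj * x jj)
  have hsumι : ∀ (f : ({A // A ∈ F} ⊕ ({r // r ∈ R} ⊕ Bool)) → ℚ),
      ∑ i, f i = (∑ s : {A // A ∈ F}, f (Sum.inl s))
        + ((∑ r : {r // r ∈ R}, f (Sum.inr (Sum.inl r)))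
          + (f (Sum.inr (Sum.inr true)) + f (Sum.inr (Sum.inr false)))) := by
    intro f
    rw [Fintype.sum_sum_type, Fintype.sum_sum_type, Fintype.sum_bool]
  -- properties of any solution of the system
  have hsolprops : ∀ (v : ℚ) (x : Fin (nR+1) → ℚ), x 0 = v →
      (∀ i, AKLP.dot (Aa i) x ≤ bb i) →
      (∀ j : Fin nR, 0 ≤ x j.succ) ∧ ((∑ j : Fin nR, x j.succ) = 1)
        ∧ ∀ s : {A // A ∈ F}, v ≤ ∑ j : Fin nR, indic j s * x j.succ := by
    intro v x hx0 hsat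
    have hnn : ∀ j : Fin nR, 0 ≤ x j.succ := by
      intro j
      have hs := hsat (Sum.inr (Sum.inl (σ j)))
      rw [hdot, hAa, hbb] at hs
      simp only [Sum.elim_inl, Sum.elim_inr, Fin.cons_zero, Fin.cons_succ] at hs
      rw [Finset.sum_congr rfl (fun j' _ => show (if σ j' = σ j then (-1:ℚ) else 0) * x j'.succ
            = (if j' = j then -x j'.succ else 0) by
          by_cases hjj : j' = j
          · rw [if_pos hjj, if_pos (by rw [hjj])]
            ring
          · rw [if_neg hjj, if_neg (fun hEq => hjj (hσinj hEq)), zero_mul]),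
        Finset.sum_ite_eq' Finset.univ j (fun j' => -x j'.succ)] at hs
      simp only [Finset.mem_univ, if_true] at hs
      linarith
    have hsum1 : ∑ j : Fin nR, x j.succ = 1 := by
      have ht := hsat (Sum.inr (Sum.inr true))
      have hf := hsat (Sum.inr (Sum.inr false))
      rw [hdot, hAa, hbb] at ht hf
      simp only [Sum.elim_inl, Sum.elim_inr, Fin.cons_zero, Fin.cons_succ, if_true,
        Bool.false_eq_true, if_false, zero_mul, zero_add, one_mul, neg_mul, one_mul,
        Finset.sum_neg_distrib] at ht hf
      have ht' : ∑ j : Fin nR, x j.succ ≤ 1 := by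
        calc ∑ j : Fin nR, x j.succ = ∑ j : Fin nR, (if (true : Bool) = true then (1:ℚ) else -1) * x j.succ := by
              simp
          _ ≤ 1 := by simpa using ht
      have hf' : (1:ℚ) ≤ ∑ j : Fin nR, x j.succ := by
        have : ∑ j : Fin nR, (if (false : Bool) = true then (1:ℚ) else -1) * x j.succ ≤ -1 := by
          simpa using hf
        simp only [Bool.false_eq_true, if_false, neg_one_mul, Finset.sum_neg_distrib] at this
        linarith
      linarith
    refine ⟨hnn, hsum1, ?_⟩
    intro s
    have hs := hsat (Sum.inl s)
    rw [hdot, hAa, hbb] at hs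
    simp only [Sum.elim_inl, Fin.cons_zero, Fin.cons_succ, one_mul, neg_mul] at hs
    rw [Finset.sum_neg_distrib] at hs
    rw [hx0] at hs
    linarith
  -- feasibility of v = 0
  obtain ⟨r0v, hr0⟩ := hRne
  have hfeas0 : ∀ k, e k * 0 ≤ c k := by
    refine (hEquiv 0).mpr ⟨Fin.cons 0 (fun j => if σ j = ⟨r0v, hr0⟩ then (1:ℚ) else 0),
      Fin.cons_zero _ _, ?_⟩
    intro i
    rcases i with s | r | t
    · rw [hdot, hAa, hbb]
      simp only [Sum.elim_inl, Fin.cons_zero, Fin.cons_succ, one_mul, mul_zero]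
      rw [zero_add]
      refine Finset.sum_nonpos fun j _ => ?_
      have h1 := hindnn j s
      have h2 : (0:ℚ) ≤ if σ j = ⟨r0v, hr0⟩ then (1:ℚ) else 0 := by split <;> norm_num
      nlinarith
    · rw [hdot, hAa, hbb]
      simp only [Sum.elim_inl, Sum.elim_inr, Fin.cons_zero, Fin.cons_succ, zero_mul, zero_add]
      refine Finset.sum_nonpos fun j _ => ?_
      split <;> split <;> norm_num
    · rcases t with _ | _
      · -- false
        rw [hdot, hAa, hbb]
        simp only [Sum.elim_inr, Fin.cons_zero, Fin.cons_succ, Bool.false_eq_true, if_false,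
          zero_mul, zero_add, neg_one_mul, Finset.sum_neg_distrib]
        rw [Finset.sum_congr rfl (fun j _ => show (if σ j = ⟨r0v, hr0⟩ then (1:ℚ) else 0)
              = (if j = eR ⟨r0v, hr0⟩ then (1:ℚ) else 0) by
            by_cases hj : j = eR ⟨r0v, hr0⟩
            · rw [if_pos hj, if_pos (by rw [hj, hσeR])]
            · rw [if_neg hj, if_neg (fun hEq => hj (hσinj (by rw [hEq, hσeR])))]),
          Finset.sum_ite_eq' Finset.univ (eR ⟨r0v, hr0⟩) (fun _ => (1:ℚ))]
        simp
      · -- true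
        rw [hdot, hAa, hbb]
        simp only [Sum.elim_inr, Fin.cons_zero, Fin.cons_succ, if_true, zero_mul, zero_add, one_mul]
        rw [Finset.sum_congr rfl (fun j _ => show (if σ j = ⟨r0v, hr0⟩ then (1:ℚ) else 0)
              = (if j = eR ⟨r0v, hr0⟩ then (1:ℚ) else 0) by
            by_cases hj : j = eR ⟨r0v, hr0⟩
            · rw [if_pos hj, if_pos (by rw [hj, hσeR])]
            · rw [if_neg hj, if_neg (fun hEq => hj (hσinj (by rw [hEq, hσeR])))]),
          Finset.sum_ite_eq' Finset.univ (eR ⟨r0v, hr0⟩) (fun _ => (1:ℚ))]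
        simp
  -- upper bound
  have hub : ∀ v : ℚ, (∀ k, e k * v ≤ c k) → v ≤ 1 := by
    intro v hv
    obtain ⟨x, hx0, hsat⟩ := (hEquiv v).mp hv
    obtain ⟨hnn, hsum1, hcov⟩ := hsolprops v x hx0 hsat
    obtain ⟨s0v, hs0⟩ := hFne
    calc v ≤ ∑ j : Fin nR, indic j ⟨s0v, hs0⟩ * x j.succ := hcov ⟨s0v, hs0⟩
      _ ≤ ∑ j : Fin nR, x j.succ :=
        Finset.sum_le_sum fun j _ => by
          have := hindle1 j ⟨s0v, hs0⟩; have := hindnn j ⟨s0v, hs0⟩; have := hnn j; nlinarith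
      _ = 1 := hsum1
  -- the optimum
  set Kpos : Finset κ := Finset.univ.filter (fun k => 0 < e k) with hKpos
  have hKne : Kpos.Nonempty := by
    by_contra hno
    rw [Finset.not_nonempty_iff_eq_empty] at hno
    have h2 : ∀ k, e k * 2 ≤ c k := by
      intro k
      have hk0 : ¬ 0 < e k := by
        intro hk
        have : k ∈ Kpos := by rw [hKpos]; exact Finset.mem_filter.mpr ⟨Finset.mem_univ k, hk⟩
        rw [hno] at this
        exact absurd this (Finset.notMem_empty k)
      have := hfeas0 k
      push_neg at hk0
      nlinarith
    linarith [hub 2 h2]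
  set vstar : ℚ := Kpos.inf' hKne (fun k => c k / e k) with hvstar
  have hepos : ∀ k ∈ Kpos, 0 < e k := by
    intro k hk
    rw [hKpos, Finset.mem_filter] at hk
    exact hk.2
  have hv0 : 0 ≤ vstar := by
    rw [hvstar]
    refine Finset.le_inf' hKne _ fun k hk => ?_
    have := hfeas0 k
    exact div_nonneg (by linarith) (hepos k hk).le
  have hvU : ∀ k, e k * vstar ≤ c k := by
    intro k
    rcases lt_trichotomy (e k) 0 with hneg | hz | hpos
    · nlinarith [hfeas0 k]
    · rw [hz, zero_mul]; linarith [hfeas0 k]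
    · have hkK : k ∈ Kpos := by rw [hKpos]; exact Finset.mem_filter.mpr ⟨Finset.mem_univ k, hpos⟩
      have : vstar ≤ c k / e k := by rw [hvstar]; exact Finset.inf'_le _ hkK
      rw [le_div_iff₀ hpos] at this
      linarith
  have hvmax : ∀ v : ℚ, (∀ k, e k * v ≤ c k) → v ≤ vstar := by
    intro v hv
    rw [hvstar]
    refine Finset.le_inf' hKne _ fun k hk => ?_
    rw [le_div_iff₀ (hepos k hk)]
    linarith [hv k]
  -- duality: α ≤ vstar
  have hαv : α ≤ (vstar : ℝ) := by
    by_contra hcon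
    push_neg at hcon
    obtain ⟨q, hq1, hq2⟩ := exists_rat_btwn hcon
    have hvq : vstar < q := by exact_mod_cast hq1
    have hnotall : ¬ ∀ k, e k * q ≤ c k := fun hq' => absurd (hvmax q hq') (not_le.mpr hvq)
    push_neg at hnotall
    obtain ⟨k, hk⟩ := hnotall
    -- column 0 : sum of the y-weights over the F-rows equals e k
    have hS : ∑ s : {A // A ∈ F}, Y k (Sum.inl s) = e k := by
      have hc := hcol0 k
      rw [hsumι (fun i => Y k i * Aa i 0), hAa] at hc
      simp only [Sum.elim_inl, Sum.elim_inr, Fin.cons_zero, mul_one, mul_zero,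
        Finset.sum_const_zero, add_zero, zero_add] at hc
      exact hc
    have hSnn : 0 ≤ ∑ s : {A // A ∈ F}, Y k (Sum.inl s) :=
      Finset.sum_nonneg fun s _ => hYnn k (Sum.inl s)
    -- b-row : yt - yf = c k
    have hcb : Y k (Sum.inr (Sum.inr true)) - Y k (Sum.inr (Sum.inr false)) = c k := by
      have hc := hbY k
      rw [hsumι (fun i => Y k i * bb i), hbb] at hc
      simp only [Sum.elim_inl, Sum.elim_inr, mul_zero, Finset.sum_const_zero, zero_add,
        if_true, Bool.false_eq_true, if_false, mul_one, mul_neg] at hc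
      linarith
    -- row equations
    have hrow : ∀ r : {r // r ∈ R}, ∑ s : {A // A ∈ F}, Y k (Sum.inl s) * indic (eR r) s
        = c k - Y k (Sum.inr (Sum.inl r)) := by
      intro r
      have hc := hcolj k (eR r).succ (Fin.succ_ne_zero _)
      rw [hsumι (fun i => Y k i * Aa i (eR r).succ), hAa] at hc
      simp only [Sum.elim_inl, Sum.elim_inr, Fin.cons_succ, mul_neg, mul_one,
        Finset.sum_neg_distrib, if_true, Bool.false_eq_true, if_false] at hc
      rw [Finset.sum_congr rfl (fun r' _ => show Y k (Sum.inr (Sum.inl r')) * (if σ (eR r) = r' then (-1:ℚ) else 0)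
            = (if r' = r then -Y k (Sum.inr (Sum.inl r')) else 0) by
          by_cases hrr : r' = r
          · rw [if_pos hrr, if_pos (by rw [hrr, hσeR])]
            ring
          · rw [if_neg hrr, if_neg (fun hEq => hrr (by rw [← hEq, hσeR])), mul_zero]),
        Finset.sum_ite_eq' Finset.univ r (fun r' => -Y k (Sum.inr (Sum.inl r')))] at hc
      simp only [Finset.mem_univ, if_true] at hc
      linarith
    have hk' : c k < (∑ s : {A // A ∈ F}, Y k (Sum.inl s)) * q := by rw [hS]; exact hk
    rcases eq_or_lt_of_le hSnn with hS0 | hSpos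
    · -- degenerate case: total weight on F-rows is zero
      have hall0 : ∀ s : {A // A ∈ F}, Y k (Sum.inl s) = 0 := by
        have hz := (Finset.sum_eq_zero_iff_of_nonneg (fun s _ => hYnn k (Sum.inl s))).mp hS0.symm
        exact fun s => hz s (Finset.mem_univ s)
      have h0 := hrow ⟨r0v, hr0⟩
      rw [Finset.sum_congr rfl (fun s _ => by rw [hall0 s, zero_mul]),
        Finset.sum_const_zero] at h0
      have hy := hYnn k (Sum.inr (Sum.inl ⟨r0v, hr0⟩))
      rw [← hS0, zero_mul] at hk'
      linarith
    · -- main case : build the dual multiset and contradict the hypothesis h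
      set S : ℚ := ∑ s : {A // A ∈ F}, Y k (Sum.inl s) with hSdef
      set μ : {A // A ∈ F} → ℚ := fun s => Y k (Sum.inl s) / S with hμ
      have hμnn : ∀ s, 0 ≤ μ s := fun s => div_nonneg (hYnn k (Sum.inl s)) hSpos.le
      have hμsum : ∑ s : {A // A ∈ F}, μ s = 1 := by
        rw [hμ]
        rw [← Finset.sum_div]
        exact div_self (ne_of_gt hSpos)
      have hμr : ∀ r : {r // r ∈ R}, ∑ s : {A // A ∈ F}, μ s * indic (eR r) s ≤ c k / S := by
        intro r
        have heq : ∑ s : {A // A ∈ F}, μ s * indic (eR r) s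
            = (∑ s : {A // A ∈ F}, Y k (Sum.inl s) * indic (eR r) s) / S := by
          rw [hμ, Finset.sum_div]
          exact Finset.sum_congr rfl fun s _ => by ring
        rw [heq, hrow r]
        have hy := hYnn k (Sum.inr (Sum.inl r))
        gcongr
        linarith
      set Dn : ℕ := ∏ s : {A // A ∈ F}, (μ s).den with hDn
      have hDnpos : 0 < Dn := by
        rw [hDn]; exact Finset.prod_pos fun s _ => (μ s).den_pos
      have hmn : ∀ s : {A // A ∈ F}, ∃ ms : ℕ, (ms : ℚ) = μ s * Dn := fun s =>
        AKLP.exists_nat_mul (μ s) (hμnn s) Dn (by rw [hDn]; exact Finset.dvd_prod_of_mem _ (Finset.mem_univ s))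
      choose mn hmnval using hmn
      set F' : Multiset (Set (EuclideanSpace ℝ (Fin d))) :=
        ∑ s : {A // A ∈ F}, Multiset.replicate (mn s) (s : Set (EuclideanSpace ℝ (Fin d))) with hF'
      have hF'card : Multiset.card F' = Dn := by
        rw [hF', AKLP.card_finsum]
        simp only [Multiset.card_replicate]
        have hcast : ((∑ s : {A // A ∈ F}, mn s : ℕ) : ℚ) = Dn := by
          push_cast
          rw [Finset.sum_congr rfl fun s _ => hmnval s, ← Finset.sum_mul, hμsum, one_mul]
        exact_mod_cast hcast
      have hF'mem : ∀ B ∈ F', B ∈ F := by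
        intro B hB
        rw [hF'] at hB
        obtain ⟨s, _, hBs⟩ := Multiset.mem_sum.mp hB
        rw [Multiset.eq_of_mem_replicate hBs]
        exact s.prop
      have hF'ne : F' ≠ 0 := by
        rw [← Multiset.card_pos, hF'card]
        exact hDnpos
      obtain ⟨xpt, hxpt⟩ := h F' hF'mem hF'ne
      obtain ⟨rv, hrR, hriff⟩ := hR xpt
      have hcount : ((Multiset.countP (fun A => xpt ∈ A) F' : ℕ) : ℚ)
          = (Dn : ℚ) * ∑ s : {A // A ∈ F}, μ s * indic (eR ⟨rv, hrR⟩) s := by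
        rw [hF', AKLP.countP_finsum]
        rw [Finset.sum_congr rfl fun s _ => AKLP.countP_replicate _ _ _]
        push_cast
        rw [Finset.mul_sum]
        refine Finset.sum_congr rfl fun s _ => ?_
        rw [hindic]
        dsimp only
        have hmemiff : xpt ∈ (s : Set (EuclideanSpace ℝ (Fin d)))
            ↔ ((σ (eR ⟨rv, hrR⟩) : {r // r ∈ R}) : EuclideanSpace ℝ (Fin d)) ∈ (s : Set (EuclideanSpace ℝ (Fin d))) := by
          rw [hσeR]
          exact hriff (s : Set (EuclideanSpace ℝ (Fin d))) s.prop
        by_cases hmem : xpt ∈ (s : Set (EuclideanSpace ℝ (Fin d)))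
        · rw [if_pos hmem, if_pos (hmemiff.mp hmem), hmnval s]
          ring
        · rw [if_neg hmem, if_neg (fun hc => hmem (hmemiff.mpr hc)), mul_zero, mul_zero]
      have hcountlt : ((Multiset.countP (fun A => xpt ∈ A) F' : ℕ) : ℚ) < (Dn : ℚ) * q := by
        rw [hcount]
        have h1 := hμr ⟨rv, hrR⟩
        have h2 : c k / S < q := by
          rw [div_lt_iff₀ hSpos]
          linarith [hk']
        have hDq : (0:ℚ) < (Dn:ℚ) := by exact_mod_cast hDnpos
        nlinarith
      have hcountltR : ((Multiset.countP (fun A => xpt ∈ A) F' : ℕ) : ℝ) < (Dn : ℝ) * (q : ℝ) := by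
        exact_mod_cast hcountlt
      rw [hF'card] at hxpt
      have hDR : (0:ℝ) < (Dn:ℝ) := by exact_mod_cast hDnpos
      nlinarith [hxpt, hcountltR, hq2, hDR]
  -- primal extraction
  obtain ⟨x, hx0, hsat⟩ := (hEquiv vstar).mp hvU
  obtain ⟨hnn, hsum1, hcov⟩ := hsolprops vstar x hx0 hsat
  set D : ℕ := ∏ j : Fin nR, (x j.succ).den with hD
  have hDpos : 0 < D := by
    rw [hD]; exact Finset.prod_pos fun j _ => (x j.succ).den_pos
  have hm : ∀ j : Fin nR, ∃ mj : ℕ, (mj : ℚ) = x j.succ * D := fun j =>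
    AKLP.exists_nat_mul (x j.succ) (hnn j) D (by rw [hD]; exact Finset.dvd_prod_of_mem _ (Finset.mem_univ j))
  choose m hmval using hm
  refine ⟨∑ j : Fin nR, Multiset.replicate (m j) ((σ j : {r // r ∈ R}) : EuclideanSpace ℝ (Fin d)), ?_, ?_⟩
  · -- nonzero
    rw [← Multiset.card_pos, AKLP.card_finsum]
    simp only [Multiset.card_replicate]
    have hcast : ((∑ j : Fin nR, m j : ℕ) : ℚ) = D := by
      push_cast
      rw [Finset.sum_congr rfl fun j _ => hmval j, ← Finset.sum_mul, hsum1, one_mul]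
    have : (∑ j : Fin nR, m j) = D := by exact_mod_cast hcast
    rw [this]
    exact hDpos
  · intro A hA
    have hcardQ : Multiset.card (∑ j : Fin nR, Multiset.replicate (m j)
        ((σ j : {r // r ∈ R}) : EuclideanSpace ℝ (Fin d))) = D := by
      rw [AKLP.card_finsum]
      simp only [Multiset.card_replicate]
      have hcast : ((∑ j : Fin nR, m j : ℕ) : ℚ) = D := by
        push_cast
        rw [Finset.sum_congr rfl fun j _ => hmval j, ← Finset.sum_mul, hsum1, one_mul]
      exact_mod_cast hcast
    have hcount : Multiset.countP (fun y => y ∈ A) (∑ j : Fin nR, Multiset.replicate (m j)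
        ((σ j : {r // r ∈ R}) : EuclideanSpace ℝ (Fin d))) = ∑ j : Fin nR,
        if ((σ j : {r // r ∈ R}) : EuclideanSpace ℝ (Fin d)) ∈ A then m j else 0 := by
      rw [AKLP.countP_finsum]
      exact Finset.sum_congr rfl fun j _ => AKLP.countP_replicate _ _ _
    have hcountq : ((Multiset.countP (fun y => y ∈ A) (∑ j : Fin nR, Multiset.replicate (m j)
        ((σ j : {r // r ∈ R}) : EuclideanSpace ℝ (Fin d))) : ℕ) : ℚ)
        = (D : ℚ) * ∑ j : Fin nR, indic j ⟨A, hA⟩ * x j.succ := by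
      rw [hcount]
      push_cast
      rw [Finset.mul_sum]
      refine Finset.sum_congr rfl fun j _ => ?_
      rw [hindic]
      dsimp only
      by_cases hmem : ((σ j : {r // r ∈ R}) : EuclideanSpace ℝ (Fin d)) ∈ A
      · rw [if_pos hmem, if_pos hmem, one_mul, hmval j]
        ring
      · rw [if_neg hmem, if_neg hmem, zero_mul, mul_zero]
    have hgeq : (D : ℚ) * vstar ≤ ((Multiset.countP (fun y => y ∈ A) (∑ j : Fin nR, Multiset.replicate (m j)
        ((σ j : {r // r ∈ R}) : EuclideanSpace ℝ (Fin d))) : ℕ) : ℚ) := by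
      rw [hcountq]
      have := hcov ⟨A, hA⟩
      have hDq : (0:ℚ) ≤ (D:ℚ) := by positivity
      nlinarith
    rw [hcardQ]
    have hDR : (0:ℝ) < (D:ℝ) := by exact_mod_cast hDpos
    have hgeqR : (D : ℝ) * (vstar : ℝ) ≤ ((Multiset.countP (fun y => y ∈ A) (∑ j : Fin nR, Multiset.replicate (m j)
        ((σ j : {r // r ∈ R}) : EuclideanSpace ℝ (Fin d))) : ℕ) : ℝ) := by
      exact_mod_cast hgeq
    have h1 : (D:ℝ) * α ≤ (D:ℝ) * (vstar:ℝ) := mul_le_mul_of_nonneg_left hαv (le_of_lt hDR)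
    linarith [hgeqR]
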